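/- Let a_1, ..., a_N be real numbers that are linearly independent over the rationals, let b_1, ..., b_N be arbitrary real numbers, and let ε, T be positive real numbers. Then there exist a real number t > T and integers x_1, ..., x_N such that |t·a_j − b_j − x_j| ≤ ε for all 1 ≤ j ≤ N. -/

import Mathlib

lemma norm_exp_real_mul_I' (r : ℝ) : ‖Complex.exp ((r:ℂ) * Complex.I)‖ = 1 :=
  Complex.norm_exp_ofReal_mul_I r



open Complex Finset intervalIntegral in
lemma aux_mean {ι : Type*} [Fintype ι] [DecidableEq ι] (A : ι → ℂ) (c : ι → ℝ) (i0 : ι)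
    (hc : ∀ i, i ≠ i0 → c i ≠ 0) (hc0 : c i0 = 0) (T : ℝ) (η : ℝ) (hη : 0 < η) :
    ∃ t, T < t ∧ ‖A i0‖ - η ≤ ‖∑ i, A i * Complex.exp (c i * t * Complex.I)‖ := by
  by_contra h
  push_neg at h
  set g : ℝ → ℂ := fun t => ∑ i, A i * Complex.exp (c i * t * Complex.I) with hg
  set B : ℝ := ‖A i0‖ - η with hB
  have hB0 : 0 < B := by
    have := h (T + 1) (by linarith)
    calc (0:ℝ) ≤ ‖g (T+1)‖ := norm_nonneg _
    _ < B := this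
  set E : ℝ := ∑ i ∈ univ.erase i0, 2 * ‖A i‖ / |c i| with hE
  have hE0 : 0 ≤ E := Finset.sum_nonneg fun i _ => by positivity
  set S : ℝ := max 1 (E / η * 2) with hS
  have hS1 : 1 ≤ S := le_max_left _ _
  have hS0 : 0 < S := lt_of_lt_of_le one_pos hS1
  have hES : E ≤ η / 2 * S := by
    have : E / η * 2 ≤ S := le_max_right _ _
    calc E = η / 2 * (E / η * 2) := by field_simp
    _ ≤ η / 2 * S := by nlinarith
  -- integrability
  have hcont : ∀ i : ι, Continuous fun t : ℝ => A i * Complex.exp (c i * t * Complex.I) := by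
    intro i; continuity
  have hInt : ∀ i ∈ univ, IntervalIntegrable
      (fun t : ℝ => A i * Complex.exp (c i * t * Complex.I)) MeasureTheory.volume (T+1) (T+1+S) :=
    fun i _ => ((hcont i).intervalIntegrable _ _)
  have hsplit : (∫ t in (T+1)..(T+1+S), g t)
      = ∑ i, ∫ t in (T+1)..(T+1+S), A i * Complex.exp (c i * t * Complex.I) :=
    intervalIntegral.integral_finset_sum hInt
  -- value of each integral
  have hval : ∀ i : ι, i ≠ i0 →
      ‖∫ t in (T+1)..(T+1+S), A i * Complex.exp (c i * t * Complex.I)‖ ≤ 2 * ‖A i‖ / |c i| := by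
    intro i hi
    have hci : (c i : ℂ) * Complex.I ≠ 0 := by
      simp [Complex.ext_iff, hc i hi]
    have key := integral_exp_mul_complex (a := T+1) (b := T+1+S) hci
    have heq : (∫ t in (T+1)..(T+1+S), A i * Complex.exp (c i * t * Complex.I))
        = A i * ((Complex.exp (((c i : ℂ) * Complex.I) * (T+1+S : ℝ)) - Complex.exp (((c i : ℂ) * Complex.I) * (T+1 : ℝ))) / ((c i : ℂ) * Complex.I)) := by
      rw [intervalIntegral.integral_const_mul, ← key]
      congr 1
      apply intervalIntegral.integral_congr
      intro t _
      ring_nf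
    rw [heq, norm_mul, norm_div]
    have h1 : ‖Complex.exp (((c i : ℂ) * Complex.I) * (T+1+S : ℝ)) - Complex.exp (((c i : ℂ) * Complex.I) * (T+1 : ℝ))‖ ≤ 2 := by
      refine le_trans (norm_sub_le _ _) ?_
      have e1 : ‖Complex.exp (((c i : ℂ) * Complex.I) * (T+1 : ℝ))‖ = 1 := by
        rw [show ((c i : ℂ) * Complex.I) * (T+1 : ℝ) = ((c i * (T+1) : ℝ) : ℂ) * Complex.I by push_cast; ring]
        exact Complex.norm_exp_ofReal_mul_I _
      have e2 : ‖Complex.exp (((c i : ℂ) * Complex.I) * (T+1+S : ℝ))‖ = 1 := by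
        rw [show ((c i : ℂ) * Complex.I) * (T+1+S : ℝ) = ((c i * (T+1+S) : ℝ) : ℂ) * Complex.I by push_cast; ring]
        exact Complex.norm_exp_ofReal_mul_I _
      rw [e1, e2]; norm_num
    have h2 : ‖(c i : ℂ) * Complex.I‖ = |c i| := by
      rw [norm_mul, Complex.norm_real, Complex.norm_I, mul_one, Real.norm_eq_abs]
    rw [h2, ← mul_div_assoc]
    have hci' : 0 < |c i| := abs_pos.mpr (hc i hi)
    have hnum : ‖A i‖ * ‖Complex.exp (((c i : ℂ) * Complex.I) * (T+1+S : ℝ)) - Complex.exp (((c i : ℂ) * Complex.I) * (T+1 : ℝ))‖ ≤ 2 * ‖A i‖ := by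
      nlinarith [norm_nonneg (A i)]
    gcongr
  -- the i0 integral
  have hval0' : (∫ t in (T+1)..(T+1+S), A i0 * Complex.exp (c i0 * t * Complex.I)) = A i0 * S := by
    simp only [hc0, Complex.ofReal_zero, zero_mul, Complex.exp_zero, mul_one]
    rw [intervalIntegral.integral_const]
    rw [show T + 1 + S - (T + 1) = S by ring, Complex.real_smul, mul_comm]
  -- lower bound on the norm of the integral
  have hlow : ‖A i0‖ * S - E ≤ ‖∫ t in (T+1)..(T+1+S), g t‖ := by
    rw [hsplit]
    rw [← Finset.add_sum_erase _ _ (Finset.mem_univ i0), hval0']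
    have h1 : ‖∑ i ∈ univ.erase i0, ∫ t in (T+1)..(T+1+S), A i * Complex.exp (c i * t * Complex.I)‖ ≤ E := by
      refine le_trans (norm_sum_le _ _) ?_
      exact Finset.sum_le_sum fun i hi => hval i (Finset.ne_of_mem_erase hi)
    have h2 : ‖A i0 * (S:ℂ)‖ = ‖A i0‖ * S := by
      rw [norm_mul, Complex.norm_real, Real.norm_eq_abs, abs_of_pos hS0]
    calc ‖A i0‖ * S - E = ‖A i0 * (S:ℂ)‖ - E := by rw [h2]
    _ ≤ ‖A i0 * (S:ℂ)‖ - ‖∑ i ∈ univ.erase i0, ∫ t in (T+1)..(T+1+S), A i * Complex.exp (c i * t * Complex.I)‖ := by linarith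
    _ ≤ ‖A i0 * (S:ℂ) + ∑ i ∈ univ.erase i0, ∫ t in (T+1)..(T+1+S), A i * Complex.exp (c i * t * Complex.I)‖ := by
        have := norm_sub_le (A i0 * (S:ℂ) + ∑ i ∈ univ.erase i0, ∫ t in (T+1)..(T+1+S), A i * Complex.exp (c i * t * Complex.I)) (∑ i ∈ univ.erase i0, ∫ t in (T+1)..(T+1+S), A i * Complex.exp (c i * t * Complex.I))
        rw [add_sub_cancel_right] at this
        linarith
  -- upper bound
  have hup : ‖∫ t in (T+1)..(T+1+S), g t‖ ≤ B * S := by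
    have := intervalIntegral.norm_integral_le_of_norm_le_const (C := B) (f := g) (a := T+1) (b := T+1+S) ?_
    · rw [show |T + 1 + S - (T + 1)| = S by rw [show T+1+S-(T+1) = S by ring]; exact abs_of_pos hS0] at this
      exact this
    · intro x hx
      rw [Set.uIoc_of_le (by linarith)] at hx
      exact (h x (by linarith [hx.1])).le
  have : ‖A i0‖ * S - η / 2 * S ≤ B * S := by
    calc ‖A i0‖ * S - η / 2 * S ≤ ‖A i0‖ * S - E := by linarith
    _ ≤ ‖∫ t in (T+1)..(T+1+S), g t‖ := hlow
    _ ≤ B * S := hup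
  rw [hB] at this
  nlinarith

open Real in
lemma aux_abs (θ : ℝ) :
    ‖1 + Complex.exp ((2*Real.pi*θ : ℝ) * Complex.I)‖ = 2 * |Real.cos (Real.pi * θ)| := by
  set r : ℝ := 2*Real.pi*θ with hr
  set z : ℂ := 1 + Complex.exp ((r : ℝ) * Complex.I) with hz
  have hre : z.re = 1 + Real.cos r := by
    simp [hz, Complex.exp_ofReal_mul_I_re]
  have him : z.im = Real.sin r := by
    simp [hz, Complex.exp_ofReal_mul_I_im]
  have hsq : ‖z‖^2 = (1 + Real.cos r)^2 + (Real.sin r)^2 := by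
    rw [Complex.sq_norm, Complex.normSq_apply, hre, him]; ring
  have h1 : Real.cos r = 2 * Real.cos (Real.pi*θ)^2 - 1 := by
    rw [hr, show 2*Real.pi*θ = 2*(Real.pi*θ) by ring]
    exact Real.cos_two_mul _
  have h2 := Real.sin_sq_add_cos_sq r
  have h3 : (0:ℝ) ≤ 2 * |Real.cos (Real.pi * θ)| := by positivity
  have h4 : ‖z‖^2 = (2 * |Real.cos (Real.pi * θ)|)^2 := by
    rw [hsq, mul_pow, sq_abs]; nlinarith
  nlinarith [norm_nonneg z]

open Real in
lemma aux_cos (θ ε' : ℝ) (hε1 : 0 < ε') (hε2 : ε' ≤ 1/4)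
    (h : 2 * Real.cos (Real.pi * ε') ≤ ‖1 + Complex.exp ((2*Real.pi*θ : ℝ) * Complex.I)‖) :
    |θ - round θ| ≤ ε' := by
  rw [aux_abs] at h
  have h' : Real.cos (Real.pi * ε') ≤ |Real.cos (Real.pi * θ)| := by linarith
  set d : ℝ := θ - round θ with hd
  have hd2 : |d| ≤ 1/2 := abs_sub_round θ
  have hπ : (0:ℝ) < Real.pi := Real.pi_pos
  have hcos : |Real.cos (Real.pi * θ)| = Real.cos (Real.pi * |d|) := by
    have he : Real.pi * θ = Real.pi * d + (round θ : ℝ) * Real.pi := by push_cast; ring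
    rw [he, Real.cos_add, Real.sin_int_mul_pi, mul_zero, sub_zero, abs_mul]
    have h4 : |Real.cos ((round θ : ℝ) * Real.pi)| = 1 := by
      have := Real.sin_sq_add_cos_sq ((round θ : ℝ) * Real.pi)
      rw [Real.sin_int_mul_pi] at this
      nlinarith [abs_nonneg (Real.cos ((round θ : ℝ) * Real.pi)), sq_abs (Real.cos ((round θ : ℝ) * Real.pi))]
    rw [h4, mul_one, ← Real.cos_abs (Real.pi * d), abs_mul, abs_of_pos hπ]
    exact abs_of_nonneg (Real.cos_nonneg_of_mem_Icc ⟨by nlinarith [abs_nonneg d], by nlinarith⟩)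
  rw [hcos] at h'
  by_contra hcon
  push_neg at hcon
  have : Real.cos (Real.pi * |d|) < Real.cos (Real.pi * ε') := by
    apply Real.strictAntiOn_cos
    · constructor <;> nlinarith
    · constructor <;> nlinarith [abs_nonneg d]
    · nlinarith
  linarith

open Finset in
lemma aux_expand (N k : ℕ) (a b : Fin N → ℝ) (t : ℝ) :
    (∑ n : Fin N → Fin (2*k+1),
      ((∏ j, ((2*k).choose (n j : ℕ) : ℂ)) * Complex.exp ((-(2*Real.pi*(∑ j, (n j : ℝ) * b j)) : ℝ) * Complex.I))
        * Complex.exp (((2*Real.pi*(∑ j, ((n j : ℝ) - k) * a j)) : ℝ) * (t:ℂ) * Complex.I))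
    = (∏ j, (1 + Complex.exp ((2*Real.pi*(t * a j - b j) : ℝ) * Complex.I)))^(2*k)
      * Complex.exp ((-(2*Real.pi*k*(t * ∑ j, a j)) : ℝ) * Complex.I) := by
  have hbin : ∀ (z : ℂ), (1+z)^(2*k) = ∑ m : Fin (2*k+1), z^(m:ℕ) * ((2*k).choose (m:ℕ) : ℂ) := by
    intro z
    rw [add_comm, add_pow, ← Fin.sum_univ_eq_sum_range (fun m => z^m * 1^(2*k-m) * ((2*k).choose m : ℂ)) (2*k+1)]
    simp
  rw [← Finset.prod_pow]
  simp_rw [hbin]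
  rw [Finset.prod_univ_sum (fun _ => (univ : Finset (Fin (2*k+1))))]
  rw [Finset.sum_mul]
  apply Finset.sum_congr
  · simp [Fintype.piFinset_univ]
  intro n _
  rw [Finset.prod_mul_distrib]
  simp_rw [← Complex.exp_nat_mul]
  rw [← Complex.exp_sum]
  conv_rhs => rw [mul_comm (Complex.exp _) (∏ j, ((2*k).choose (n j : ℕ) : ℂ)), mul_assoc, ← Complex.exp_add]
  rw [mul_assoc, ← Complex.exp_add]
  congr 1
  push_cast
  simp only [Finset.mul_sum, Finset.sum_mul, neg_mul, ← Finset.sum_neg_distrib]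
  rw [← Finset.sum_add_distrib, ← Finset.sum_add_distrib]
  congr 1
  exact Finset.sum_congr rfl fun j _ => by ring

/-- Kronecker's theorem on simultaneous diophantine approximation. -/
theorem stmt_0 (N : ℕ) (a b : Fin N → ℝ) (ha : LinearIndependent ℚ a)
    (ε T : ℝ) (hε : 0 < ε) (hT : 0 < T) :
    ∃ t : ℝ, T < t ∧ ∃ x : Fin N → ℤ, ∀ j, |t * a j - b j - (x j : ℝ)| ≤ ε := by
  classical
  have hπ : (0:ℝ) < Real.pi := Real.pi_pos
  set ε' : ℝ := min ε (1/4) with hε'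
  have hε'0 : 0 < ε' := lt_min hε (by norm_num)
  have hε'4 : ε' ≤ 1/4 := min_le_right _ _
  have hε'ε : ε' ≤ ε := min_le_left _ _
  set γ : ℝ := Real.cos (Real.pi * ε') with hγ
  have hmul : Real.pi * ε' ≤ Real.pi * (1/4) := mul_le_mul_of_nonneg_left hε'4 hπ.le
  have hmul0 : 0 < Real.pi * ε' := mul_pos hπ hε'0
  have hmem1 : Real.pi * ε' < Real.pi/2 := by linarith
  have hmem2 : -(Real.pi/2) < Real.pi * ε' := by linarith
  have hγ0 : 0 < γ := Real.cos_pos_of_mem_Ioo ⟨hmem2, hmem1⟩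
  have hγ1 : γ < 1 := by
    have hm0 : (0:ℝ) ∈ Set.Icc (0:ℝ) Real.pi := Set.left_mem_Icc.2 hπ.le
    have hm1 : Real.pi * ε' ∈ Set.Icc (0:ℝ) Real.pi := Set.mem_Icc.2 ⟨hmul0.le, by linarith⟩
    have h := Real.strictAntiOn_cos hm0 hm1 hmul0
    rw [Real.cos_zero] at h
    exact h
  have hγsq : γ^2 < 1 := by nlinarith
  have htend : Filter.Tendsto (fun n : ℕ => (n:ℝ)^N * (γ^2)^n) Filter.atTop (nhds 0) :=
    tendsto_pow_const_mul_const_pow_of_lt_one N (by positivity) hγsq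
  have hsmall : (0:ℝ) < 1 / (2 * 2^N) := by positivity
  obtain ⟨k, hk1, hk2⟩ := ((Filter.eventually_ge_atTop 1).and
    (htend.eventually_lt_const hsmall)).exists
  have hk0 : 0 < k := hk1
  have h2N : (0:ℝ) < 2^N := by positivity
  have hkbound : ((2:ℝ)*k)^N * (γ^2)^k ≤ 1/2 := by
    have hgk : (0:ℝ) ≤ (γ^2)^k := by positivity
    calc ((2:ℝ)*k)^N * (γ^2)^k = 2^N * ((k:ℝ)^N * (γ^2)^k) := by rw [mul_pow]; ring
    _ ≤ 2^N * (1/(2*2^N)) := mul_le_mul_of_nonneg_left hk2.le h2N.le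
    _ = 1/2 := by field_simp
  set C : ℝ := ((2*k).choose k : ℝ) with hC
  have hC4 : (4:ℝ)^k ≤ 2*(k:ℝ)*C := by
    have h' := Nat.four_pow_le_two_mul_self_mul_centralBinom k hk0
    rw [Nat.centralBinom_eq_two_mul_choose] at h'
    have h'' : (((4:ℕ)^k : ℕ) : ℝ) ≤ ((2*k*((2*k).choose k) : ℕ) : ℝ) := Nat.cast_le.mpr h'
    push_cast at h''
    rw [hC]
    linarith
  have hC0 : 0 < C := by
    rw [hC]
    exact_mod_cast Nat.choose_pos (show k ≤ 2*k by omega)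
  set M : ℝ := C^N with hM
  have hM0 : 0 < M := by positivity
  have hkey : ((2:ℝ)^N * γ)^(2*k) ≤ M / 2 := by
    have e1a : ((2:ℝ)^N)^(2*k) = ((4:ℝ)^k)^N := by
      rw [show (4:ℝ) = 2^2 by norm_num, ← pow_mul, ← pow_mul, ← pow_mul]
      congr 1
      ring
    have e1b : γ^(2*k) = (γ^2)^k := by rw [← pow_mul]
    have e1 : ((2:ℝ)^N * γ)^(2*k) = ((4:ℝ)^k)^N * (γ^2)^k := by
      rw [mul_pow, e1a, e1b]
    have e2 : ((4:ℝ)^k)^N ≤ ((2*(k:ℝ)))^N * M := by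
      calc ((4:ℝ)^k)^N ≤ ((2*(k:ℝ))*C)^N := pow_le_pow_left₀ (by positivity) hC4 N
      _ = ((2*(k:ℝ)))^N * M := by rw [mul_pow, hM]
    have hgk : (0:ℝ) ≤ (γ^2)^k := by positivity
    have h2kN : (0:ℝ) ≤ ((2*(k:ℝ)))^N := by positivity
    rw [e1]
    calc ((4:ℝ)^k)^N * (γ^2)^k ≤ (((2*(k:ℝ)))^N * M) * (γ^2)^k :=
          mul_le_mul_of_nonneg_right e2 hgk
    _ = M * (((2*(k:ℝ))^N) * (γ^2)^k) := by ring
    _ ≤ M * (1/2) := mul_le_mul_of_nonneg_left hkbound hM0.le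
    _ = M / 2 := by ring
  -- the trigonometric sum
  set A : (Fin N → Fin (2*k+1)) → ℂ := fun n =>
    (∏ j, ((2*k).choose (n j : ℕ) : ℂ)) * Complex.exp ((-(2*Real.pi*(∑ j, (n j : ℝ) * b j)) : ℝ) * Complex.I) with hA
  set c : (Fin N → Fin (2*k+1)) → ℝ := fun n => 2*Real.pi*(∑ j, ((n j : ℝ) - k) * a j) with hc
  set i0 : (Fin N → Fin (2*k+1)) := fun _ => (⟨k, by omega⟩ : Fin (2*k+1)) with hi0
  have hcne : ∀ n, n ≠ i0 → c n ≠ 0 := by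
    intro n hn hczero
    apply hn
    have hsum : (∑ j, ((n j : ℝ) - k) * a j) = 0 := by
      have h2π : (2*Real.pi) ≠ 0 := by positivity
      rw [hc] at hczero
      exact (mul_eq_zero.mp hczero).resolve_left h2π
    set q : Fin N → ℚ := fun j => ((n j : ℕ) : ℚ) - k with hq
    have hq0 : ∀ j, q j = 0 := by
      apply Fintype.linearIndependent_iff.mp ha
      rw [← hsum]
      apply Finset.sum_congr rfl
      intro j _
      rw [Rat.smul_def, hq]
      push_cast
      ring
    funext j
    have h5 : ((n j : ℕ) : ℚ) - k = 0 := by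
      have := hq0 j
      rwa [hq] at this
    have hnat : ((n j : ℕ) : ℚ) = k := by linarith
    have hnat' : (n j : ℕ) = k := by exact_mod_cast hnat
    exact Fin.ext (by simpa [hi0] using hnat')
  have hc0 : c i0 = 0 := by
    simp [hc, hi0]
  have hnormA : ‖A i0‖ = M := by
    rw [hA]
    simp only
    rw [norm_mul, norm_exp_real_mul_I', mul_one, norm_prod]
    simp only [Complex.norm_natCast]
    show ∏ _x : Fin N, ((2*k).choose k : ℝ) = M
    rw [Finset.prod_const, Finset.card_univ, Fintype.card_fin, hM, hC]
  obtain ⟨t, htT, hlow⟩ := aux_mean A c i0 hcne hc0 T (M/2) (by positivity)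
  rw [hnormA] at hlow
  have hsum_eq : (∑ n, A n * Complex.exp (c n * t * Complex.I))
      = (∏ j, (1 + Complex.exp ((2*Real.pi*(t * a j - b j) : ℝ) * Complex.I)))^(2*k)
        * Complex.exp ((-(2*Real.pi*k*(t * ∑ j, a j)) : ℝ) * Complex.I) := by
    rw [← aux_expand N k a b t]
  rw [hsum_eq] at hlow
  set P : ℝ := ‖∏ j, (1 + Complex.exp ((2*Real.pi*(t * a j - b j) : ℝ) * Complex.I))‖ with hP
  have hnorm2 : ‖(∏ j, (1 + Complex.exp ((2*Real.pi*(t * a j - b j) : ℝ) * Complex.I)))^(2*k)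
        * Complex.exp ((-(2*Real.pi*k*(t * ∑ j, a j)) : ℝ) * Complex.I)‖ = P^(2*k) := by
    rw [norm_mul, norm_exp_real_mul_I', mul_one, norm_pow]
  rw [hnorm2] at hlow
  have hPlow : ((2:ℝ)^N * γ) ≤ P := by
    apply le_of_pow_le_pow_left₀ (n := 2*k) (by omega) (norm_nonneg _)
    calc ((2:ℝ)^N * γ)^(2*k) ≤ M / 2 := hkey
    _ = M - M/2 := by ring
    _ ≤ P^(2*k) := hlow
  refine ⟨t, htT, fun j => round (t * a j - b j), fun j => ?_⟩
  have hfactor : 2 * γ ≤ ‖1 + Complex.exp ((2*Real.pi*(t * a j - b j) : ℝ) * Complex.I)‖ := by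
    set f : Fin N → ℝ := fun i => ‖1 + Complex.exp ((2*Real.pi*(t * a i - b i) : ℝ) * Complex.I)‖ with hf
    have hf2 : ∀ i, f i ≤ 2 := by
      intro i
      calc f i ≤ ‖(1:ℂ)‖ + ‖Complex.exp ((2*Real.pi*(t * a i - b i) : ℝ) * Complex.I)‖ :=
            norm_add_le _ _
      _ = 2 := by rw [norm_exp_real_mul_I', norm_one]; norm_num
    have hf0 : ∀ i, 0 ≤ f i := fun i => norm_nonneg _
    have hPf : P = ∏ i, f i := by rw [hP, norm_prod]
    have hsplit : P = f j * ∏ i ∈ Finset.univ.erase j, f i := by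
      rw [hPf, Finset.mul_prod_erase _ _ (Finset.mem_univ j)]
    have hrest : ∏ i ∈ Finset.univ.erase j, f i ≤ 2^(N-1) := by
      calc ∏ i ∈ Finset.univ.erase j, f i ≤ ∏ _i ∈ Finset.univ.erase j, (2:ℝ) :=
            Finset.prod_le_prod (fun i _ => hf0 i) (fun i _ => hf2 i)
      _ = 2^(N-1) := by
        rw [Finset.prod_const, Finset.card_erase_of_mem (Finset.mem_univ j),
          Finset.card_univ, Fintype.card_fin]
    have hrest0 : 0 ≤ ∏ i ∈ Finset.univ.erase j, f i := Finset.prod_nonneg fun i _ => hf0 i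
    have hNpos : 0 < N := j.pos
    have hN1 : (2:ℝ)^N = 2 * 2^(N-1) := by
      conv_lhs => rw [show N = (N-1)+1 by omega]
      rw [pow_succ']
    have h2N1 : (0:ℝ) < 2^(N-1) := by positivity
    by_contra hcon
    push_neg at hcon
    have hPle : P ≤ f j * 2^(N-1) := by
      rw [hsplit]
      exact mul_le_mul_of_nonneg_left hrest (hf0 j)
    nlinarith
  have hfin := aux_cos (t * a j - b j) ε' hε'0 hε'4 (by rw [← hγ]; exact hfactor)
  calc |t * a j - b j - (round (t * a j - b j) : ℝ)| ≤ ε' := hfin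
  _ ≤ ε := hε'ε
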